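/- arXiv:1611.09933 — 2 statements merged into one kernel-verified Lean document; each statement's English description precedes it below -/
import Mathlib

section
/- If random variables Z_1, ..., Z_{n+1} are exchangeable, then the probability that Z_{n+1} is strictly greater than max(Z_1, ..., Z_n) is at most 1/(n+1). -/
open MeasureTheory ENNReal

/-- If `Z 0, …, Z n` (that is, `Z₁,…,Z_{n+1}`) are exchangeable real random variables, then the
probability that the last one strictly exceeds the maximum of the first `n` is at most
`1/(n+1)`. -/
theorem exchangeable_prob_last_gt_max {Ω : Type*} [MeasurableSpace Ω]
    (μ : Measure Ω) [IsProbabilityMeasure μ] (n : ℕ)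
    (Z : Ω → Fin (n + 1) → ℝ) (hZ : Measurable Z)
    (hexch : ∀ σ : Equiv.Perm (Fin (n + 1)),
      μ.map (fun ω => fun i => Z ω (σ i)) = μ.map Z) :
    μ {ω | ∀ i : Fin n, Z ω i.castSucc < Z ω (Fin.last n)} ≤ 1 / ((n : ℝ≥0∞) + 1) := by
  classical
  set S : Fin (n + 1) → Set (Fin (n + 1) → ℝ) :=
    fun j => {f | ∀ i, i ≠ j → f i < f j} with hSdef
  have hSmeas : ∀ j, MeasurableSet (S j) := by
    intro j
    have : S j = ⋂ i, ⋂ (_ : i ≠ j), {f : Fin (n + 1) → ℝ | f i < f j} := by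
      ext f; simp [hSdef]
    rw [this]
    exact MeasurableSet.iInter fun i => MeasurableSet.iInter fun _ =>
      measurableSet_lt (measurable_pi_apply i) (measurable_pi_apply j)
  have hdisj : Pairwise (Function.onFun Disjoint S) := by
    intro j k hjk
    refine Set.disjoint_left.2 fun f hf hf' => ?_
    exact lt_asymm (hf k hjk.symm) (hf' j hjk)
  have key : ∀ j, (μ.map Z) (S j) = (μ.map Z) (S (Fin.last n)) := by
    intro j
    set σ := Equiv.swap j (Fin.last n) with hσ
    have hmeas2 : Measurable (fun ω => fun i => Z ω (σ i)) :=
      measurable_pi_lambda _ fun i => (measurable_pi_apply (σ i)).comp hZ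
    calc (μ.map Z) (S j)
        = (μ.map (fun ω => fun i => Z ω (σ i))) (S (Fin.last n)) := by
          rw [Measure.map_apply hZ (hSmeas j), Measure.map_apply hmeas2 (hSmeas _)]
          congr 1
          ext ω
          simp only [Set.mem_preimage, hSdef, Set.mem_setOf_eq]
          constructor
          · intro h i hi
            have hσi : σ i ≠ j := by
              intro hc
              apply hi
              have : σ i = σ (Fin.last n) := by rw [hc, hσ, Equiv.swap_apply_right]
              exact σ.injective this
            have := h (σ i) hσi
            simpa [hσ, Equiv.swap_apply_right] using this
          · intro h k hk
            have hk' : σ k ≠ Fin.last n := by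
              intro hc
              apply hk
              have : σ k = σ j := by rw [hc, hσ, Equiv.swap_apply_left]
              exact σ.injective this
            have := h (σ k) hk'
            simpa [hσ, Equiv.swap_apply_left, Equiv.swap_apply_right,
              Equiv.swap_apply_self] using this
      _ = (μ.map Z) (S (Fin.last n)) := by rw [hexch σ]
  have htarget : {ω | ∀ i : Fin n, Z ω i.castSucc < Z ω (Fin.last n)} = Z ⁻¹' S (Fin.last n) := by
    ext ω
    simp only [Set.mem_setOf_eq, Set.mem_preimage, hSdef]
    constructor
    · intro h k hk
      obtain ⟨i, rfl⟩ := Fin.exists_castSucc_eq.2 hk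
      exact h i
    · intro h i
      exact h i.castSucc (Fin.castSucc_lt_last i).ne
  have hsum : (∑ j, (μ.map Z) (S j)) ≤ 1 := by
    rw [← tsum_fintype (L := SummationFilter.unconditional _), ← measure_iUnion hdisj hSmeas]
    exact prob_le_one.trans_eq (by simp)
  have hconst : (∑ j, (μ.map Z) (S j)) = (n + 1) * (μ.map Z) (S (Fin.last n)) := by
    rw [Finset.sum_congr rfl fun j _ => key j]
    simp [Finset.sum_const, mul_comm, nsmul_eq_mul]
  rw [htarget, ← Measure.map_apply hZ (hSmeas _)]
  rw [ENNReal.le_div_iff_mul_le (Or.inl (by simp)) (Or.inl (by simp))]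
  calc (μ.map Z) (S (Fin.last n)) * ((n : ℝ≥0∞) + 1)
      = (n + 1) * (μ.map Z) (S (Fin.last n)) := by ring
    _ = ∑ j, (μ.map Z) (S j) := hconst.symm
    _ ≤ 1 := hsum
end

section
/- If Z_1, ..., Z_{n+1} are exchangeable real random variables and each Z_i almost surely distinct, then the rank of Z_{n+1} among Z_1, ..., Z_{n+1} is uniformly distributed on {1, 2, ..., n+1}. -/
open MeasureTheory ENNReal

private noncomputable def rk {n : ℕ} (j : Fin (n+1)) (z : Fin (n+1) → ℝ) : ℕ :=
  (Finset.univ.filter fun i => z i ≤ z j).card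

private lemma rk_eq_ncard {n : ℕ} (j : Fin (n+1)) (z : Fin (n+1) → ℝ) :
    Set.ncard {i : Fin (n+1) | z i ≤ z j} = rk j z := by
  rw [show {i : Fin (n+1) | z i ≤ z j} = ↑(Finset.univ.filter fun i => z i ≤ z j) by
    ext i; simp]
  exact Set.ncard_coe_finset _

private lemma rk_comp_perm {n : ℕ} (σ : Equiv.Perm (Fin (n+1))) (j : Fin (n+1))
    (z : Fin (n+1) → ℝ) : rk j (fun i => z (σ i)) = rk (σ j) z := by
  unfold rk
  apply Finset.card_bij (fun i _ => σ i)
  · intro a ha; simpa using (by simpa using ha : z (σ a) ≤ z (σ j))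
  · intro a _ b _ h; exact σ.injective h
  · intro b hb; exact ⟨σ.symm b, by simpa using (by simpa using hb : z b ≤ z (σ j)), by simp⟩

private lemma measurable_rk {n : ℕ} (j : Fin (n+1)) :
    Measurable fun z : Fin (n+1) → ℝ => rk j z := by
  have : (fun z : Fin (n+1) → ℝ => rk j z)
      = fun z => ∑ i : Fin (n+1), if z i ≤ z j then 1 else 0 := by
    funext z; rw [rk, Finset.card_filter]
  rw [this]
  exact Finset.measurable_sum _ fun i _ =>
    Measurable.ite (measurableSet_le (measurable_pi_apply i) (measurable_pi_apply j))
      measurable_const measurable_const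

private lemma rk_injective {n : ℕ} {z : Fin (n+1) → ℝ} (hz : Function.Injective z) :
    Function.Injective (fun j => rk j z) := by
  intro a b hab
  by_contra hne
  wlog h : z a < z b generalizing a b
  · exact this hab.symm (Ne.symm hne) (lt_of_le_of_ne (not_lt.mp h) (fun e => hne (hz e.symm)))
  have hsub : (Finset.univ.filter fun i => z i ≤ z a) ⊂ (Finset.univ.filter fun i => z i ≤ z b) := by
    constructor
    · intro i hi; simp only [Finset.mem_filter] at *; exact ⟨hi.1, hi.2.trans h.le⟩
    · intro hsub'
      have : b ∈ Finset.univ.filter fun i => z i ≤ z a := hsub' (by simp)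
      simp only [Finset.mem_filter] at this
      exact absurd this.2 (not_le.mpr h)
  exact absurd (hab : rk a z = rk b z) (Nat.ne_of_lt (Finset.card_lt_card hsub))

private lemma rk_exists_unique {n : ℕ} {z : Fin (n+1) → ℝ} (hz : Function.Injective z)
    (k : Fin (n+1)) : ∃! j, rk j z = (k : ℕ) + 1 := by
  have hinj := rk_injective hz
  have hmem : ∀ j, rk j z ∈ Finset.Icc 1 (n+1) := by
    intro j
    simp only [Finset.mem_Icc]
    constructor
    · exact Finset.card_pos.mpr ⟨j, by simp⟩
    · have := Finset.card_filter_le (Finset.univ : Finset (Fin (n+1))) (fun i => z i ≤ z j)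
      exact this.trans (by simp)
  have himg : Finset.image (fun j => rk j z) Finset.univ = Finset.Icc 1 (n+1) := by
    apply Finset.eq_of_subset_of_card_le
    · intro x hx; simp only [Finset.mem_image] at hx; obtain ⟨j, _, rfl⟩ := hx; exact hmem j
    · rw [Finset.card_image_of_injective _ hinj]
      simp
  have hk : (k : ℕ) + 1 ∈ Finset.Icc 1 (n+1) := by
    simp only [Finset.mem_Icc]
    exact ⟨Nat.le_add_left 1 _, Nat.succ_le_succ (Nat.lt_succ_iff.mp k.isLt)⟩
  rw [← himg] at hk
  simp only [Finset.mem_image] at hk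
  obtain ⟨j, _, hj⟩ := hk
  exact ⟨j, hj, fun j' hj' => hinj (hj'.trans hj.symm)⟩

/-- If `Z₁,…,Z_{n+1}` are exchangeable and almost surely distinct, then the rank of `Z_{n+1}`,
namely `#{i : Z i ≤ Z_{n+1}}`, is uniformly distributed on `{1,…,n+1}`. -/
theorem exchangeable_rank_uniform {Ω : Type*} [MeasurableSpace Ω]
    (μ : Measure Ω) [IsProbabilityMeasure μ] (n : ℕ)
    (Z : Ω → Fin (n + 1) → ℝ) (hZ : Measurable Z)
    (hexch : ∀ σ : Equiv.Perm (Fin (n + 1)),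
      μ.map (fun ω => fun i => Z ω (σ i)) = μ.map Z)
    (hdistinct : ∀ i j : Fin (n + 1), i ≠ j → μ {ω | Z ω i = Z ω j} = 0) :
    ∀ k : Fin (n + 1),
      μ {ω | Set.ncard {i : Fin (n + 1) | Z ω i ≤ Z ω (Fin.last n)} = (k : ℕ) + 1} =
        1 / ((n : ℝ≥0∞) + 1) := by
  intro k
  simp only [rk_eq_ncard]
  set E : Fin (n+1) → Set Ω := fun j => {ω | rk j (Z ω) = (k : ℕ) + 1} with hE
  have hSmeas : ∀ j : Fin (n+1), MeasurableSet {z : Fin (n+1) → ℝ | rk j z = (k : ℕ) + 1} :=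
    fun j => measurable_rk j (measurableSet_singleton _)
  have hEmeas : ∀ j, MeasurableSet (E j) := fun j => hZ (hSmeas j)
  -- all E j have the same measure, by exchangeability
  have key : ∀ j, μ (E j) = μ (E (Fin.last n)) := by
    intro j
    set σ : Equiv.Perm (Fin (n+1)) := Equiv.swap (Fin.last n) j with hσ
    have hm : Measurable fun z : Fin (n+1) → ℝ => fun i => z (σ i) :=
      measurable_pi_lambda _ fun i => measurable_pi_apply _
    have h1 : E j = (fun ω => fun i => Z ω (σ i)) ⁻¹' {z | rk (Fin.last n) z = (k : ℕ) + 1} := by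
      ext ω
      simp only [hE, Set.mem_setOf_eq, Set.mem_preimage, rk_comp_perm, hσ,
        Equiv.swap_apply_left]
    have hm' : Measurable fun ω => fun i => Z ω (σ i) := hm.comp hZ
    calc μ (E j)
        = μ.map (fun ω => fun i => Z ω (σ i)) {z | rk (Fin.last n) z = (k : ℕ) + 1} := by
          rw [Measure.map_apply hm' (hSmeas _), h1]
      _ = μ.map Z {z | rk (Fin.last n) z = (k : ℕ) + 1} := by rw [hexch σ]
      _ = μ (E (Fin.last n)) := by rw [Measure.map_apply hZ (hSmeas _)]; rfl
  -- the set of ω with all coordinates distinct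
  set D : Set Ω := {ω | Function.Injective (Z ω)} with hD
  have hDmeas : MeasurableSet D := by
    have hDeq : D = ⋂ i, ⋂ j, ⋂ (_ : i ≠ j), {ω | Z ω i ≠ Z ω j} := by
      ext ω
      simp only [hD, Set.mem_iInter, Set.mem_setOf_eq]
      constructor
      · intro h i j hij he; exact hij (h he)
      · intro h a b hab; by_contra hne; exact h a b hne hab
    rw [hDeq]
    exact MeasurableSet.iInter fun i => MeasurableSet.iInter fun j =>
      MeasurableSet.iInter fun _ =>
        (measurableSet_eq_fun ((measurable_pi_apply i).comp hZ)
          ((measurable_pi_apply j).comp hZ)).compl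
  have hDc : μ Dᶜ = 0 := by
    have hsub : Dᶜ ⊆ ⋃ i, ⋃ j, {ω | i ≠ j ∧ Z ω i = Z ω j} := by
      intro ω hω
      simp only [hD, Set.mem_compl_iff, Set.mem_setOf_eq, Function.Injective,
        not_forall] at hω
      obtain ⟨i, j, heq, hne⟩ := hω
      exact Set.mem_iUnion.mpr ⟨i, Set.mem_iUnion.mpr ⟨j, hne, heq⟩⟩
    refine measure_mono_null hsub (measure_iUnion_null fun i => measure_iUnion_null fun j => ?_)
    by_cases h : i = j
    · subst h; simp
    · exact measure_mono_null (fun ω hω => hω.2) (hdistinct i j h)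
  have hDone : μ D = 1 := by
    refine le_antisymm prob_le_one ?_
    have h := measure_union_le (μ := μ) D Dᶜ
    rw [Set.union_compl_self D] at h
    simpa [hDc] using h
  -- for ω ∈ D, exactly one j with rk j (Z ω) = k+1
  have hdisj : Pairwise (Function.onFun Disjoint fun j => E j ∩ D) := by
    intro a b hab
    refine Set.disjoint_left.mpr fun ω ha hb => ?_
    exact hab ((rk_exists_unique hb.2 k).unique ha.1 hb.1)
  have hUnion : (⋃ j, E j ∩ D) = D := by
    ext ω
    simp only [Set.mem_iUnion, Set.mem_inter_iff]
    constructor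
    · rintro ⟨j, _, hωD⟩; exact hωD
    · intro hωD
      obtain ⟨j, hj, -⟩ := rk_exists_unique hωD k
      exact ⟨j, hj, hωD⟩
  have hsum : ∑ j : Fin (n+1), μ (E j ∩ D) = 1 := by
    rw [← tsum_fintype (L := .unconditional _), ← measure_iUnion hdisj fun j => (hEmeas j).inter hDmeas, hUnion, hDone]
  have hEj : ∀ j, μ (E j ∩ D) = μ (E j) := by
    intro j
    refine le_antisymm (measure_mono Set.inter_subset_left) ?_
    have h1 := measure_union_le (μ := μ) (E j ∩ D) (E j \ D)
    rw [Set.inter_union_diff (E j) D] at h1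
    have h2 : μ (E j \ D) = 0 := measure_mono_null (fun ω hω => hω.2) hDc
    simpa [h2] using h1
  have hfinal : ((n : ℝ≥0∞) + 1) * μ (E (Fin.last n)) = 1 := by
    have hs : ∑ j : Fin (n+1), μ (E j) = 1 := by
      rw [← hsum]; exact Finset.sum_congr rfl fun j _ => (hEj j).symm
    calc ((n : ℝ≥0∞) + 1) * μ (E (Fin.last n))
        = ∑ _j : Fin (n+1), μ (E (Fin.last n)) := by
          rw [Finset.sum_const, Finset.card_univ, Fintype.card_fin, nsmul_eq_mul,
            Nat.cast_add, Nat.cast_one]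
      _ = ∑ j : Fin (n+1), μ (E j) := Finset.sum_congr rfl fun j _ => (key j).symm
      _ = 1 := hs
  have hne : ((n : ℝ≥0∞) + 1) ≠ 0 := by simp
  have hnt : ((n : ℝ≥0∞) + 1) ≠ ⊤ := by finiteness
  show μ (E (Fin.last n)) = 1 / ((n : ℝ≥0∞) + 1)
  rw [ENNReal.eq_div_iff hne hnt]
  exact hfinal
end
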